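/- arXiv:2510.24104 — 5 statements merged into one kernel-verified Lean document; each statement's English description precedes it below -/
import Mathlib

section
/- Let z₀ ∈ ℂ and 0 < ρ₀ < ρ₁, let D₁ = {z : |z−z₀| < ρ₁} be the open disk and R = {z : ρ₀ < |z−z₀| < ρ₁} the open annulus. Let H : ℝ → ℂ → ℂ be such that for each u > 0 the map z ↦ H(u,z) is analytic on D₁, and let (h_s)_{s≥0} be a sequence of functions analytic on R. Suppose that for every n ≥ 1 there exist constants C_n > 0 and u_n > 0 such that |H(u,z) − Σ_{s=0}^{n−1} h_s(z) u^{−s}| ≤ C_n u^{−n} for all u ≥ u_n and all z ∈ R. Then each h_s extends to a function ĥ_s analytic on all of D₁ (agreeing with h_s on R), and for every n ≥ 1, |H(u,z) − Σ_{s=0}^{n−1} ĥ_s(z) u^{−s}| ≤ C_n u^{−n} holds for all u ≥ u_n and all z ∈ D₁. -/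
open Filter Metric Topology

/-- Auxiliary sequence: `EA H n u z = u^n * (H u z - ∑_{s<n} ĥ_s z u^{-s})`,
defined recursively so that the coefficients `ĥ_s` are obtained as limits. -/
noncomputable def EA (H : ℝ → ℂ → ℂ) : ℕ → ℝ → ℂ → ℂ
  | 0 => H
  | n+1 => fun u z => (u : ℂ) * (EA H n u z - limUnder Filter.atTop (fun k : ℕ => EA H n k z))

/-- The analytically continued coefficients. -/
noncomputable def hhatF (H : ℝ → ℂ → ℂ) (n : ℕ) (z : ℂ) : ℂ :=
  limUnder Filter.atTop (fun k : ℕ => EA H n k z)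

lemma EA_succ (H : ℝ → ℂ → ℂ) (n : ℕ) (u : ℝ) (z : ℂ) :
    EA H (n+1) u z = (u : ℂ) * (EA H n u z - hhatF H n z) := rfl

lemma EA_eq (H : ℝ → ℂ → ℂ) (n : ℕ) (u : ℝ) (hu : u ≠ 0) (z : ℂ) :
    EA H n u z
      = (u:ℂ)^n * (H u z - ∑ s ∈ Finset.range n, hhatF H s z * (u:ℂ)^(-(s:ℤ))) := by
  have hu' : (u:ℂ) ≠ 0 := Complex.ofReal_ne_zero.mpr hu
  induction n with
  | zero => simp [EA]
  | succ n ih =>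
    have key : (u:ℂ)^(n+1) * (u:ℂ)^(-(n:ℤ)) = u := by
      rw [zpow_neg, zpow_natCast, pow_succ]
      field_simp
    rw [EA_succ, ih, Finset.sum_range_succ]
    linear_combination (hhatF H n z) * key

/-- Theorem 2 of the paper: a function analytic on a disk whose uniform asymptotic
expansion in inverse powers of a large parameter `u` is known on an annulus inside
the disk has that expansion, with analytically continued coefficients, on the
whole disk. -/
theorem stmt_0 (z₀ : ℂ) (ρ₀ ρ₁ : ℝ) (hρ₀ : 0 < ρ₀) (hρ : ρ₀ < ρ₁)
    (H : ℝ → ℂ → ℂ) (h : ℕ → ℂ → ℂ)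
    (hH : ∀ u : ℝ, 0 < u → AnalyticOnNhd ℂ (H u) (Metric.ball z₀ ρ₁))
    (hh : ∀ s : ℕ, AnalyticOnNhd ℂ (h s) {z : ℂ | ρ₀ < dist z z₀ ∧ dist z z₀ < ρ₁})
    (C u₀ : ℕ → ℝ)
    (hC : ∀ n : ℕ, 1 ≤ n → 0 < C n)
    (hu₀ : ∀ n : ℕ, 1 ≤ n → 0 < u₀ n)
    (hbound : ∀ n : ℕ, 1 ≤ n → ∀ u : ℝ, u₀ n ≤ u →
      ∀ z ∈ {z : ℂ | ρ₀ < dist z z₀ ∧ dist z z₀ < ρ₁},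
        ‖H u z - ∑ s ∈ Finset.range n, h s z * (u : ℂ) ^ (-(s : ℤ))‖
          ≤ C n * u ^ (-(n : ℤ))) :
    ∃ hhat : ℕ → ℂ → ℂ,
      (∀ s : ℕ, AnalyticOnNhd ℂ (hhat s) (Metric.ball z₀ ρ₁)) ∧
      (∀ s : ℕ, ∀ z ∈ {z : ℂ | ρ₀ < dist z z₀ ∧ dist z z₀ < ρ₁}, hhat s z = h s z) ∧
      (∀ n : ℕ, 1 ≤ n → ∀ u : ℝ, u₀ n ≤ u →
        ∀ z ∈ Metric.ball z₀ ρ₁,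
          ‖H u z - ∑ s ∈ Finset.range n, hhat s z * (u : ℂ) ^ (-(s : ℤ))‖
            ≤ C n * u ^ (-(n : ℤ))) := by
  set ann : Set ℂ := {z : ℂ | ρ₀ < dist z z₀ ∧ dist z z₀ < ρ₁} with hann_def
  set B : Set ℂ := Metric.ball z₀ ρ₁ with hB_def
  have hannB : ann ⊆ B := fun z hz => Metric.mem_ball.mpr hz.2
  have main : ∀ n : ℕ,
      AnalyticOnNhd ℂ (hhatF H n) B ∧
      (∀ z ∈ ann, hhatF H n z = h n z) ∧
      (∀ u : ℝ, u₀ (n+1) ≤ u → ∀ z ∈ B,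
        ‖EA H n u z - hhatF H n z‖ ≤ C (n+1) * u⁻¹) := by
    intro n
    induction n using Nat.strong_induction_on with
    | _ n IH =>
    have hn1 : 1 ≤ n + 1 := Nat.succ_le_succ (Nat.zero_le n)
    have hCp : 0 < C (n+1) := hC _ hn1
    have hup : 0 < u₀ (n+1) := hu₀ _ hn1
    -- (i) differentiability of z ↦ EA H n u z on B for u > 0
    have hdiff : ∀ u : ℝ, 0 < u → DifferentiableOn ℂ (fun z => EA H n u z) B := by
      intro u hu
      have hformula : ∀ z : ℂ, EA H n u z
          = (u:ℂ)^n * (H u z - ∑ s ∈ Finset.range n, hhatF H s z * (u:ℂ)^(-(s:ℤ))) :=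
        fun z => EA_eq H n u (ne_of_gt hu) z
      have : DifferentiableOn ℂ
          (fun z => (u:ℂ)^n * (H u z - ∑ s ∈ Finset.range n, hhatF H s z * (u:ℂ)^(-(s:ℤ)))) B := by
        apply DifferentiableOn.const_mul
        apply DifferentiableOn.sub
        · exact (hH u hu).differentiableOn
        · exact DifferentiableOn.fun_sum fun s hs =>
            ((IH s (Finset.mem_range.mp hs)).1.differentiableOn).mul_const _
      exact this.congr fun z _ => hformula z
    -- (ii) annulus bound
    have hann : ∀ u : ℝ, u₀ (n+1) ≤ u → ∀ z ∈ ann,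
        ‖EA H n u z - h n z‖ ≤ C (n+1) * u⁻¹ := by
      intro u hu z hz
      have hu0 : 0 < u := lt_of_lt_of_le hup hu
      have hune : u ≠ 0 := ne_of_gt hu0
      have hu' : (u:ℂ) ≠ 0 := Complex.ofReal_ne_zero.mpr hune
      have hb := hbound (n+1) hn1 u hu z hz
      have hEAeq : EA H n u z - h n z
          = (u:ℂ)^n * (H u z - ∑ s ∈ Finset.range (n+1), h s z * (u:ℂ)^(-(s:ℤ))) := by
        rw [EA_eq H n u hune z, Finset.sum_range_succ]
        have hsum : ∑ s ∈ Finset.range n, hhatF H s z * (u:ℂ)^(-(s:ℤ))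
            = ∑ s ∈ Finset.range n, h s z * (u:ℂ)^(-(s:ℤ)) := by
          refine Finset.sum_congr rfl fun s hs => ?_
          rw [(IH s (Finset.mem_range.mp hs)).2.1 z hz]
        rw [hsum]
        have key : (u:ℂ)^n * (u:ℂ)^(-(n:ℤ)) = 1 := by
          rw [zpow_neg, zpow_natCast]
          exact mul_inv_cancel₀ (pow_ne_zero _ hu')
        linear_combination (h n z) * key
      rw [hEAeq, norm_mul, norm_pow, Complex.norm_real, Real.norm_of_nonneg hu0.le]
      calc u^n * ‖H u z - ∑ s ∈ Finset.range (n+1), h s z * (u:ℂ)^(-(s:ℤ))‖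
          ≤ u^n * (C (n+1) * u ^ (-((n+1:ℕ)):ℤ)) := by
            exact mul_le_mul_of_nonneg_left hb (pow_nonneg hu0.le _)
        _ = C (n+1) * u⁻¹ := by
            rw [zpow_neg, zpow_natCast, pow_succ]
            field_simp
    -- (iii) two-point bound on the ball, via the maximum modulus principle
    have hball2 : ∀ u v : ℝ, u₀ (n+1) ≤ u → u₀ (n+1) ≤ v → ∀ z ∈ B,
        ‖EA H n u z - EA H n v z‖ ≤ C (n+1) * (u⁻¹ + v⁻¹) := by
      intro u v hu hv z hz
      have hu0 : 0 < u := lt_of_lt_of_le hup hu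
      have hv0 : 0 < v := lt_of_lt_of_le hup hv
      set ρ' : ℝ := (max (dist z z₀) ρ₀ + ρ₁) / 2 with hρ'def
      have hzB : dist z z₀ < ρ₁ := Metric.mem_ball.mp hz
      have hρ'1 : ρ' < ρ₁ := by
        have : max (dist z z₀) ρ₀ < ρ₁ := max_lt hzB hρ
        simp only [hρ'def]; linarith
      have hρ'0 : ρ₀ < ρ' := by
        have h1 : ρ₀ ≤ max (dist z z₀) ρ₀ := le_max_right _ _
        simp only [hρ'def]; linarith
      have hρ'pos : 0 < ρ' := lt_trans hρ₀ hρ'0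
      have hzρ' : dist z z₀ < ρ' := by
        have h1 : dist z z₀ ≤ max (dist z z₀) ρ₀ := le_max_left _ _
        have h2 : max (dist z z₀) ρ₀ < ρ₁ := max_lt hzB hρ
        simp only [hρ'def]; linarith
      have hclsub : closure (Metric.ball z₀ ρ') ⊆ B := by
        rw [closure_ball z₀ (ne_of_gt hρ'pos)]
        exact fun w hw => Metric.mem_ball.mpr (lt_of_le_of_lt (Metric.mem_closedBall.mp hw) hρ'1)
      have hdc : DiffContOnCl ℂ (fun w => EA H n u w - EA H n v w) (Metric.ball z₀ ρ') := by
        apply DifferentiableOn.diffContOnCl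
        exact ((hdiff u hu0).mono hclsub).sub ((hdiff v hv0).mono hclsub)
      have hfr : ∀ w ∈ frontier (Metric.ball z₀ ρ'),
          ‖EA H n u w - EA H n v w‖ ≤ C (n+1) * (u⁻¹ + v⁻¹) := by
        intro w hw
        rw [frontier_ball z₀ (ne_of_gt hρ'pos)] at hw
        have hwann : w ∈ ann := by
          have : dist w z₀ = ρ' := Metric.mem_sphere.mp hw
          exact ⟨by rw [this]; exact hρ'0, by rw [this]; exact hρ'1⟩
        calc ‖EA H n u w - EA H n v w‖
            ≤ ‖EA H n u w - h n w‖ + ‖EA H n v w - h n w‖ := by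
              calc ‖EA H n u w - EA H n v w‖
                  = ‖(EA H n u w - h n w) - (EA H n v w - h n w)‖ := by congr 1; ring
                _ ≤ _ := norm_sub_le _ _
          _ ≤ C (n+1) * u⁻¹ + C (n+1) * v⁻¹ :=
              add_le_add (hann u hu w hwann) (hann v hv w hwann)
          _ = C (n+1) * (u⁻¹ + v⁻¹) := by ring
      have hzcl : z ∈ closure (Metric.ball z₀ ρ') := by
        rw [closure_ball z₀ (ne_of_gt hρ'pos)]
        exact Metric.mem_closedBall.mpr hzρ'.le
      have := Complex.norm_le_of_forall_mem_frontier_norm_le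
        (Metric.isBounded_ball) hdc hfr hzcl
      exact this
    -- (iv) convergence of the natural-number sequence on B
    have hconv : ∀ z ∈ B, Tendsto (fun k : ℕ => EA H n k z) atTop (𝓝 (hhatF H n z)) := by
      intro z hz
      have hcs : CauchySeq (fun k : ℕ => EA H n k z) := by
        rw [Metric.cauchySeq_iff]
        intro ε hε
        obtain ⟨N, hN⟩ := exists_nat_gt (max (u₀ (n+1)) (2 * C (n+1) / ε))
        refine ⟨N, fun k hk l hl => ?_⟩
        have hNu : u₀ (n+1) < N := lt_of_le_of_lt (le_max_left _ _) hN
        have hNε : 2 * C (n+1) / ε < N := lt_of_le_of_lt (le_max_right _ _) hN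
        have hN0 : (0:ℝ) < N := lt_trans hup hNu
        have hk' : u₀ (n+1) ≤ (k:ℝ) := le_trans hNu.le (Nat.cast_le.mpr hk)
        have hl' : u₀ (n+1) ≤ (l:ℝ) := le_trans hNu.le (Nat.cast_le.mpr hl)
        have hk0 : (0:ℝ) < k := lt_of_lt_of_le hup hk'
        have hl0 : (0:ℝ) < l := lt_of_lt_of_le hup hl'
        have hb := hball2 (k:ℝ) (l:ℝ) hk' hl' z hz
        rw [Complex.dist_eq]
        refine lt_of_le_of_lt hb ?_
        have h1 : (k:ℝ)⁻¹ ≤ (N:ℝ)⁻¹ := by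
          apply inv_anti₀ hN0
          exact_mod_cast hk
        have h2 : (l:ℝ)⁻¹ ≤ (N:ℝ)⁻¹ := by
          apply inv_anti₀ hN0
          exact_mod_cast hl
        have : C (n+1) * ((k:ℝ)⁻¹ + (l:ℝ)⁻¹) ≤ C (n+1) * (2 * (N:ℝ)⁻¹) := by
          apply mul_le_mul_of_nonneg_left _ hCp.le
          linarith
        refine lt_of_le_of_lt this ?_
        rw [div_lt_iff₀ hε] at hNε
        have hNinv : (N:ℝ)⁻¹ * (2 * C (n+1)) < ε := by
          rw [inv_mul_lt_iff₀ hN0]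
          linarith
        calc C (n+1) * (2 * (N:ℝ)⁻¹) = (N:ℝ)⁻¹ * (2 * C (n+1)) := by ring
          _ < ε := hNinv
      obtain ⟨a, ha⟩ := cauchySeq_tendsto_of_complete hcs
      have heq' : hhatF H n z = a := ha.limUnder_eq
      rw [heq']
      exact ha
    -- uniform bound on B
    have hub : ∀ u : ℝ, u₀ (n+1) ≤ u → ∀ z ∈ B,
        ‖EA H n u z - hhatF H n z‖ ≤ C (n+1) * u⁻¹ := by
      intro u hu z hz
      have hu0 : 0 < u := lt_of_lt_of_le hup hu
      obtain ⟨N, hN⟩ := exists_nat_gt (u₀ (n+1))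
      have t1 : Tendsto (fun k : ℕ => ‖EA H n u z - EA H n (k + N : ℕ) z‖)
          atTop (𝓝 (‖EA H n u z - hhatF H n z‖)) := by
        have hsub : Tendsto (fun k : ℕ => EA H n u z - EA H n (k + N : ℕ) z) atTop
            (𝓝 (EA H n u z - hhatF H n z)) :=
          tendsto_const_nhds.sub ((hconv z hz).comp (tendsto_add_atTop_nat N))
        exact hsub.norm
      have t2 : Tendsto (fun k : ℕ => C (n+1) * (u⁻¹ + ((k + N : ℕ):ℝ)⁻¹)) atTop
          (𝓝 (C (n+1) * (u⁻¹ + 0))) := by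
        apply Tendsto.const_mul
        apply Tendsto.const_add
        exact tendsto_inv_atTop_zero.comp
          ((tendsto_natCast_atTop_atTop).comp (tendsto_add_atTop_nat N))
      have hle : ∀ k : ℕ, ‖EA H n u z - EA H n (k + N : ℕ) z‖
          ≤ C (n+1) * (u⁻¹ + ((k + N : ℕ):ℝ)⁻¹) := by
        intro k
        apply hball2 u ((k + N : ℕ):ℝ) hu _ z hz
        calc u₀ (n+1) ≤ (N:ℝ) := hN.le
          _ ≤ ((k + N : ℕ):ℝ) := by exact_mod_cast Nat.le_add_left N k
      have := le_of_tendsto_of_tendsto' t1 t2 hle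
      simpa using this
    -- hhat = h on the annulus
    have heq : ∀ z ∈ ann, hhatF H n z = h n z := by
      intro z hz
      have hlim : Tendsto (fun k : ℕ => EA H n k z) atTop (𝓝 (h n z)) := by
        rw [tendsto_iff_dist_tendsto_zero]
        have hg : Tendsto (fun k : ℕ => C (n+1) * ((k:ℝ))⁻¹) atTop (𝓝 0) := by
          have : Tendsto (fun k : ℕ => ((k:ℝ))⁻¹) atTop (𝓝 0) :=
            tendsto_inv_atTop_zero.comp tendsto_natCast_atTop_atTop
          simpa using this.const_mul (C (n+1))
        refine squeeze_zero' (Eventually.of_forall fun k => dist_nonneg) ?_ hg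
        obtain ⟨N, hN⟩ := exists_nat_gt (u₀ (n+1))
        filter_upwards [eventually_ge_atTop N] with k hk
        have hk' : u₀ (n+1) ≤ (k:ℝ) := le_trans hN.le (Nat.cast_le.mpr hk)
        rw [Complex.dist_eq]
        exact hann (k:ℝ) hk' z hz
      exact tendsto_nhds_unique (hconv z (hannB hz)) hlim
    -- analyticity on B
    have hanal : AnalyticOnNhd ℂ (hhatF H n) B := by
      have htuo : TendstoUniformlyOn (fun k : ℕ => fun z => EA H n k z) (hhatF H n) atTop B := by
        rw [Metric.tendstoUniformlyOn_iff]
        intro ε hε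
        have hev : ∀ᶠ k : ℕ in atTop, u₀ (n+1) ≤ (k:ℝ) ∧ C (n+1) * ((k:ℝ))⁻¹ < ε := by
          have h1 : ∀ᶠ k : ℕ in atTop, u₀ (n+1) ≤ (k:ℝ) := by
            obtain ⟨N, hN⟩ := exists_nat_gt (u₀ (n+1))
            filter_upwards [eventually_ge_atTop N] with k hk
            exact le_trans hN.le (Nat.cast_le.mpr hk)
          have h2 : ∀ᶠ k : ℕ in atTop, C (n+1) * ((k:ℝ))⁻¹ < ε := by
            have : Tendsto (fun k : ℕ => C (n+1) * ((k:ℝ))⁻¹) atTop (𝓝 0) := by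
              have := tendsto_inv_atTop_zero.comp
                (tendsto_natCast_atTop_atTop (R := ℝ))
              simpa using this.const_mul (C (n+1))
            exact this.eventually_lt_const hε
          exact h1.and h2
        filter_upwards [hev] with k ⟨hk1, hk2⟩ z hz
        rw [dist_comm, Complex.dist_eq]
        exact lt_of_le_of_lt (hub (k:ℝ) hk1 z hz) hk2
      have hdiffev : ∀ᶠ k : ℕ in atTop, DifferentiableOn ℂ (fun z => EA H n k z) B := by
        filter_upwards [eventually_ge_atTop 1] with k hk
        exact hdiff (k:ℝ) (by exact_mod_cast hk)
      exact (htuo.tendstoLocallyUniformlyOn.differentiableOn hdiffev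
        Metric.isOpen_ball).analyticOnNhd Metric.isOpen_ball
    exact ⟨hanal, heq, hub⟩
  refine ⟨hhatF H, fun s => (main s).1, fun s => (main s).2.1, ?_⟩
  intro n hn u hu z hz
  obtain ⟨m, rfl⟩ : ∃ m, n = m + 1 := ⟨n - 1, by omega⟩
  have hu0 : 0 < u := lt_of_lt_of_le (hu₀ (m+1) hn) hu
  have hune : u ≠ 0 := ne_of_gt hu0
  have hu' : (u:ℂ) ≠ 0 := Complex.ofReal_ne_zero.mpr hune
  have hEA := EA_eq H (m+1) u hune z
  rw [EA_succ] at hEA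
  have hkey : H u z - ∑ s ∈ Finset.range (m+1), hhatF H s z * (u:ℂ)^(-(s:ℤ))
      = ((u:ℂ)^(m+1))⁻¹ * ((u:ℂ) * (EA H m u z - hhatF H m z)) := by
    rw [hEA]
    field_simp
  rw [hkey, norm_mul, norm_mul, norm_inv, norm_pow, Complex.norm_real, Real.norm_of_nonneg hu0.le]
  have hmain := (main m).2.2 u hu z hz
  have h1 : u * ‖EA H m u z - hhatF H m z‖ ≤ u * (C (m+1) * u⁻¹) :=
    mul_le_mul_of_nonneg_left hmain hu0.le
  calc (u^(m+1))⁻¹ * (u * ‖EA H m u z - hhatF H m z‖)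
      ≤ (u^(m+1))⁻¹ * (u * (C (m+1) * u⁻¹)) := by
        apply mul_le_mul_of_nonneg_left h1
        positivity
    _ = C (m+1) * u ^ (-((m+1:ℕ)):ℤ) := by
        rw [zpow_neg, zpow_natCast]
        field_simp
end

section
/- Let α ≥ 0 and let ζ be real with ζ ≠ 0 and ζ ≠ α². Define f̂(ζ) = α²/(4ζ²) − 1/(4ζ) and g̃(ζ) = α²(4ζ − α²)/(4(ζ − α²)²ζ²). Then, with primes denoting derivatives with respect to ζ, (4·f̂(ζ)·f̂''(ζ) − 5·f̂'(ζ)²)/(16·f̂(ζ)³) + g̃(ζ)/f̂(ζ) = −ζ(3ζ + 4α²)/(4(ζ − α²)³). -/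
/-- The comparison-equation function `f̂(α,ζ) = α²/(4ζ²) − 1/(4ζ)` (equation (50)). -/
noncomputable def fhat (α ζ : ℝ) : ℝ := α ^ 2 / (4 * ζ ^ 2) - 1 / (4 * ζ)

/-- `g̃(ζ) = α²(4ζ − α²)/(4(ζ − α²)²ζ²)` (equation (67)). -/
noncomputable def gtilde (α ζ : ℝ) : ℝ :=
  α ^ 2 * (4 * ζ - α ^ 2) / (4 * (ζ - α ^ 2) ^ 2 * ζ ^ 2)

lemma fhat_hasDeriv (α x : ℝ) (hx : x ≠ 0) :
    HasDerivAt (fhat α) (-α ^ 2 / (2 * x ^ 3) + 1 / (4 * x ^ 2)) x := by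
  have hx2 : x ^ 2 ≠ 0 := pow_ne_zero _ hx
  have hx3 : x ^ 3 ≠ 0 := pow_ne_zero _ hx
  have h2 : HasDerivAt (fun y : ℝ => (y ^ 2)⁻¹) (-(2 * x ^ 1) / (x ^ 2) ^ 2) x :=
    (hasDerivAt_pow 2 x).inv hx2
  have h1 : HasDerivAt (fun y : ℝ => y⁻¹) (-(x ^ 2)⁻¹) x := hasDerivAt_inv hx
  have h := (h2.const_mul (α ^ 2 / 4)).sub (h1.const_mul (1 / 4))
  have hfun : fhat α = fun y : ℝ => α ^ 2 / 4 * (y ^ 2)⁻¹ - 1 / 4 * y⁻¹ := by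
    funext y
    simp [fhat, div_eq_mul_inv, mul_inv]
    ring
  rw [hfun, show (fun y : ℝ => α ^ 2 / 4 * (y ^ 2)⁻¹ - 1 / 4 * y⁻¹) = ((fun y : ℝ => α ^ 2 / 4 * (y ^ 2)⁻¹) - fun y : ℝ => 1 / 4 * y⁻¹) from rfl]
  refine h.congr_deriv ?_
  field_simp
  ring

lemma fhat_deriv (α x : ℝ) (hx : x ≠ 0) :
    deriv (fhat α) x = -α ^ 2 / (2 * x ^ 3) + 1 / (4 * x ^ 2) :=
  (fhat_hasDeriv α x hx).deriv

lemma fhat_deriv2 (α x : ℝ) (hx : x ≠ 0) :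
    deriv (deriv (fhat α)) x = 3 * α ^ 2 / (2 * x ^ 4) - 1 / (2 * x ^ 3) := by
  have hx3 : x ^ 3 ≠ 0 := pow_ne_zero _ hx
  have hx4 : x ^ 4 ≠ 0 := pow_ne_zero _ hx
  have hev : deriv (fhat α) =ᶠ[nhds x]
      fun y : ℝ => -α ^ 2 / 2 * (y ^ 3)⁻¹ + 1 / 4 * (y ^ 2)⁻¹ := by
    filter_upwards [eventually_ne_nhds hx] with y hy
    rw [fhat_deriv α y hy]
    field_simp
  rw [hev.deriv_eq]
  have h3 : HasDerivAt (fun y : ℝ => (y ^ 3)⁻¹) (-(3 * x ^ 2) / (x ^ 3) ^ 2) x :=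
    (hasDerivAt_pow 3 x).inv hx3
  have h2 : HasDerivAt (fun y : ℝ => (y ^ 2)⁻¹) (-(2 * x ^ 1) / (x ^ 2) ^ 2) x :=
    (hasDerivAt_pow 2 x).inv (pow_ne_zero _ hx)
  have h := (h3.const_mul (-α ^ 2 / 2)).add (h2.const_mul (1 / 4))
  rw [show (fun y : ℝ => -α ^ 2 / 2 * (y ^ 3)⁻¹ + 1 / 4 * (y ^ 2)⁻¹) = ((fun y : ℝ => -α ^ 2 / 2 * (y ^ 3)⁻¹) + fun y : ℝ => 1 / 4 * (y ^ 2)⁻¹) from rfl, h.deriv]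
  field_simp
  ring

/-- Equation (70) of the paper: the error-control function for the derivatives of the
Bessel comparison functions is `ψ̃(α,ζ) = −ζ(3ζ + 4α²)/(4(ζ − α²)³)`. -/
theorem stmt_7 (α ζ : ℝ) (hα : 0 ≤ α) (hζ0 : ζ ≠ 0) (hζα : ζ ≠ α ^ 2) :
    (4 * fhat α ζ * deriv (deriv (fhat α)) ζ - 5 * (deriv (fhat α) ζ) ^ 2)
        / (16 * (fhat α ζ) ^ 3) + gtilde α ζ / fhat α ζ
      = -(ζ * (3 * ζ + 4 * α ^ 2)) / (4 * (ζ - α ^ 2) ^ 3) := by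
  have hsub : ζ - α ^ 2 ≠ 0 := sub_ne_zero.mpr hζα
  have hf : fhat α ζ = -(ζ - α ^ 2) / (4 * ζ ^ 2) := by
    unfold fhat
    field_simp
    ring
  have h1 : -(ζ - α ^ 2) ≠ 0 := neg_ne_zero.mpr hsub
  have hfne : -(ζ - α ^ 2) / (4 * ζ ^ 2) ≠ 0 := div_ne_zero h1 (by positivity)
  have hc3 : (4 : ℝ) * (α ^ 2 - ζ) ^ 3 ≠ 0 := by
    have : α ^ 2 - ζ ≠ 0 := fun h => hsub (by linarith [sub_eq_zero.mp h])
    exact mul_ne_zero four_ne_zero (pow_ne_zero _ this)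
  have hs3 : (ζ - α ^ 2) ^ 3 ≠ 0 := pow_ne_zero _ hsub
  rw [fhat_deriv α ζ hζ0, fhat_deriv2 α ζ hζ0, hf, gtilde]
  have e1 : (4 * (-(ζ - α ^ 2) / (4 * ζ ^ 2)) * (3 * α ^ 2 / (2 * ζ ^ 4) - 1 / (2 * ζ ^ 3))
        - 5 * (-α ^ 2 / (2 * ζ ^ 3) + 1 / (4 * ζ ^ 2)) ^ 2)
        / (16 * (-(ζ - α ^ 2) / (4 * ζ ^ 2)) ^ 3)
      = (8 * (α ^ 2 - ζ) * (3 * α ^ 2 - ζ) - 5 * (ζ - 2 * α ^ 2) ^ 2)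
          / (4 * (α ^ 2 - ζ) ^ 3) := by
    rw [div_eq_div_iff (by
      exact mul_ne_zero (by norm_num) (pow_ne_zero _ hfne)) hc3]
    field_simp
    ring
  have e2 : α ^ 2 * (4 * ζ - α ^ 2) / (4 * (ζ - α ^ 2) ^ 2 * ζ ^ 2)
        / (-(ζ - α ^ 2) / (4 * ζ ^ 2))
      = -(α ^ 2 * (4 * ζ - α ^ 2)) / (ζ - α ^ 2) ^ 3 := by
    rw [div_eq_div_iff hfne hs3]
    field_simp
  rw [e1, e2]
  rw [div_add_div _ _ hc3 hs3, div_eq_div_iff (mul_ne_zero hc3 hs3)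
    (mul_ne_zero four_ne_zero hs3)]
  ring
end

section
/- Let 0 < α < 1, σ = √(1−α²), and σ < t < 1. Then the function t ↦ α·arctanh(√(t²−σ²)/(αt)) − arccosh(t/σ) is differentiable on (σ,1) with derivative √(t²−σ²)/(1−t²). Equivalently, dξ/dt = √(t²−σ²)/(1−t²), where ξ(t) = α·arctanh(√(t²−σ²)/(αt)) − arccosh(t/σ). -/
/-- The real inverse hyperbolic tangent, `arctanh x = (1/2)ln((1+x)/(1−x))`. -/
noncomputable def arctanh (x : ℝ) : ℝ := (1 / 2) * Real.log ((1 + x) / (1 - x))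

/-- The real inverse hyperbolic cosine, `arccosh x = ln(x + √(x²−1))`. -/
noncomputable def arccosh (x : ℝ) : ℝ := Real.log (x + Real.sqrt (x ^ 2 - 1))

lemma hasDerivAt_arctanh' {x : ℝ} (h1 : -1 < x) (h2 : x < 1) :
    HasDerivAt arctanh (1 / (1 - x ^ 2)) x := by
  have hx1 : (0:ℝ) < 1 + x := by linarith
  have hx2 : (0:ℝ) < 1 - x := by linarith
  have hnum : HasDerivAt (fun y : ℝ => 1 + y) 1 x := (hasDerivAt_id x).const_add 1
  have hden : HasDerivAt (fun y : ℝ => 1 - y) (-1) x := (hasDerivAt_id x).const_sub 1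
  have hdiv : HasDerivAt (fun y : ℝ => (1 + y) / (1 - y))
      ((1 * (1 - x) - (1 + x) * (-1)) / (1 - x) ^ 2) x := hnum.div hden hx2.ne'
  have hpos : (1 + x) / (1 - x) ≠ 0 := ne_of_gt (div_pos hx1 hx2)
  have := (hdiv.log hpos).const_mul (1/2 : ℝ)
  unfold arctanh
  refine this.congr_deriv (Eq.symm ?_)
  have hx3 : 1 - x ^ 2 ≠ 0 := by nlinarith [mul_pos hx1 hx2]
  have hx4 : 1 + x ≠ 0 := hx1.ne'
  have hx5 : 1 - x ≠ 0 := hx2.ne'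
  field_simp
  ring

lemma hasDerivAt_arccosh' {x : ℝ} (hx : 1 < x) :
    HasDerivAt arccosh (1 / Real.sqrt (x ^ 2 - 1)) x := by
  have hx0 : 0 < x := lt_trans one_pos hx
  have hsq : 0 < x ^ 2 - 1 := by nlinarith
  have hr2 : (Real.sqrt (x ^ 2 - 1)) ^ 2 = x ^ 2 - 1 := Real.sq_sqrt hsq.le
  have hrpos : 0 < Real.sqrt (x ^ 2 - 1) := Real.sqrt_pos.mpr hsq
  set r := Real.sqrt (x ^ 2 - 1) with hrdef
  have hinner : HasDerivAt (fun y : ℝ => y ^ 2 - 1) (2 * x) x := by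
    simpa using (hasDerivAt_pow 2 x).sub_const 1
  have hsqrt : HasDerivAt (fun y : ℝ => Real.sqrt (y ^ 2 - 1)) (2 * x / (2 * r)) x :=
    hinner.sqrt hsq.ne'
  have hsum : HasDerivAt (fun y : ℝ => y + Real.sqrt (y ^ 2 - 1)) (1 + 2 * x / (2 * r)) x :=
    (hasDerivAt_id x).add hsqrt
  have hpos : x + r ≠ 0 := by positivity
  have := hsum.log hpos
  unfold arccosh
  convert this using 1
  field_simp
  nlinarith [hr2, hrpos]

/-- Equation (106) of the paper: for `σ < t < 1`, the Liouville–Green variable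
`ξ(t) = α·arctanh(√(t²−σ²)/(αt)) − arccosh(t/σ)` is differentiable with
`dξ/dt = √(t²−σ²)/(1−t²)`. -/
theorem stmt_13 (α σ t : ℝ) (hα0 : 0 < α) (hα1 : α < 1)
    (hσ : σ = Real.sqrt (1 - α ^ 2)) (ht1 : σ < t) (ht2 : t < 1) :
    HasDerivAt
      (fun s : ℝ => α * arctanh (Real.sqrt (s ^ 2 - σ ^ 2) / (α * s)) - arccosh (s / σ))
      (Real.sqrt (t ^ 2 - σ ^ 2) / (1 - t ^ 2)) t := by
  have hα2 : 0 < 1 - α ^ 2 := by nlinarith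
  have hσ2 : σ ^ 2 = 1 - α ^ 2 := by rw [hσ]; exact Real.sq_sqrt hα2.le
  have hσ0 : 0 < σ := by rw [hσ]; exact Real.sqrt_pos.mpr hα2
  have ht0 : 0 < t := lt_trans hσ0 ht1
  have hts : 0 < t ^ 2 - σ ^ 2 := by nlinarith
  have hr2 : (Real.sqrt (t ^ 2 - σ ^ 2)) ^ 2 = t ^ 2 - σ ^ 2 := Real.sq_sqrt hts.le
  have hrpos : 0 < Real.sqrt (t ^ 2 - σ ^ 2) := Real.sqrt_pos.mpr hts
  set r := Real.sqrt (t ^ 2 - σ ^ 2) with hrdef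
  -- inner function for arctanh
  have hnum : HasDerivAt (fun s : ℝ => Real.sqrt (s ^ 2 - σ ^ 2)) (2 * t / (2 * r)) t := by
    have : HasDerivAt (fun s : ℝ => s ^ 2 - σ ^ 2) (2 * t) t := by
      simpa using (hasDerivAt_pow 2 t).sub_const (σ ^ 2)
    exact this.sqrt hts.ne'
  have hden : HasDerivAt (fun s : ℝ => α * s) α t := by
    simpa using (hasDerivAt_id t).const_mul α
  have hat : α * t ≠ 0 := by positivity
  have hu : HasDerivAt (fun s : ℝ => Real.sqrt (s ^ 2 - σ ^ 2) / (α * s))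
      ((2 * t / (2 * r) * (α * t) - r * α) / (α * t) ^ 2) t := hnum.div hden hat
  have h1t : (0:ℝ) < 1 - t ^ 2 := by nlinarith
  have hu1 : r / (α * t) < 1 := by
    rw [div_lt_one (by positivity)]
    have hsq2 : r ^ 2 < (α * t) ^ 2 := by nlinarith [mul_pos hα2 h1t]
    exact lt_of_pow_lt_pow_left₀ 2 (by positivity) hsq2
  have hu0 : (-1 : ℝ) < r / (α * t) := by
    have : (0:ℝ) ≤ r / (α * t) := by positivity
    linarith
  have h1 : HasDerivAt (fun s : ℝ => α * arctanh (Real.sqrt (s ^ 2 - σ ^ 2) / (α * s)))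
      (α * (1 / (1 - (r / (α * t)) ^ 2) *
        ((2 * t / (2 * r) * (α * t) - r * α) / (α * t) ^ 2))) t :=
    ((HasDerivAt.comp (h₂ := arctanh) t (hasDerivAt_arctanh' hu0 hu1) hu)).const_mul α
  -- arccosh part
  have hgt : 1 < t / σ := (one_lt_div hσ0).mpr ht1
  have hv : HasDerivAt (fun s : ℝ => s / σ) (1 / σ) t := by
    simpa using (hasDerivAt_id t).div_const σ
  have h2 : HasDerivAt (fun s : ℝ => arccosh (s / σ))
      (1 / Real.sqrt ((t / σ) ^ 2 - 1) * (1 / σ)) t :=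
    HasDerivAt.comp (h₂ := arccosh) t (hasDerivAt_arccosh' hgt) hv
  have hsq : Real.sqrt ((t / σ) ^ 2 - 1) = r / σ := by
    rw [show (t / σ) ^ 2 - 1 = (t ^ 2 - σ ^ 2) / σ ^ 2 by field_simp,
      Real.sqrt_div hts.le, Real.sqrt_sq hσ0.le]
  rw [hsq] at h2
  have := h1.sub h2
  refine this.congr_deriv (Eq.symm ?_)
  have hden3 : (α * t) ^ 2 - r ^ 2 ≠ 0 := by nlinarith [mul_pos hα2 h1t]
  have hr2' : r ^ 2 = t ^ 2 + α ^ 2 - 1 := by rw [hr2, hσ2]; ring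
  have hq : 1 - (r / (α * t)) ^ 2 ≠ 0 := by
    have : 0 < (1 - r / (α * t)) * (1 + r / (α * t)) := mul_pos (by linarith) (by linarith)
    nlinarith
  have hden4 : t ^ 2 * α ^ 2 - r ^ 2 ≠ 0 := by intro h; apply hden3; linarith
  have := h1t.ne'
  have := hrpos.ne'
  have := hσ0.ne'
  have := hα0.ne'
  have := ht0.ne'
  field_simp
  linear_combination (-r ^ 2) * hr2'
end

section
/- Let 0 < α < 1, σ = √(1−α²), and 0 < t < σ. Then the function t ↦ α·arccos(αt/(σ√(1−t²))) − arccos(t/σ) is differentiable on (0,σ) with derivative √(σ²−t²)/(1−t²). -/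
/-- Equation (107) of the paper: for `0 < t < σ = √(1−α²)`, the function
`t ↦ α·arccos(αt/(σ√(1−t²))) − arccos(t/σ)` is differentiable with derivative
`√(σ²−t²)/(1−t²)`. -/
theorem stmt_14 (α σ t : ℝ) (hα0 : 0 < α) (hα1 : α < 1)
    (hσ : σ = Real.sqrt (1 - α ^ 2)) (ht0 : 0 < t) (ht1 : t < σ) :
    HasDerivAt
      (fun s : ℝ => α * Real.arccos (α * s / (σ * Real.sqrt (1 - s ^ 2)))
        - Real.arccos (s / σ))
      (Real.sqrt (σ ^ 2 - t ^ 2) / (1 - t ^ 2)) t := by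
  have hα2 : 0 < 1 - α ^ 2 := by nlinarith
  have hσ0 : 0 < σ := by rw [hσ]; positivity
  have hσ2 : σ ^ 2 = 1 - α ^ 2 := by rw [hσ]; exact Real.sq_sqrt hα2.le
  have hσ1 : σ < 1 := by nlinarith
  have ht1' : t < 1 := ht1.trans hσ1
  have hBt : 0 < 1 - t ^ 2 := by nlinarith
  have hAt : 0 < σ ^ 2 - t ^ 2 := by nlinarith
  set B := Real.sqrt (1 - t ^ 2) with hBdef
  set A := Real.sqrt (σ ^ 2 - t ^ 2) with hAdef
  have hB0 : 0 < B := Real.sqrt_pos.mpr hBt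
  have hA0 : 0 < A := Real.sqrt_pos.mpr hAt
  have hB2 : B ^ 2 = 1 - t ^ 2 := Real.sq_sqrt hBt.le
  have hA2 : A ^ 2 = σ ^ 2 - t ^ 2 := Real.sq_sqrt hAt.le
  -- inner derivative of 1 - s^2
  have h1 : HasDerivAt (fun s : ℝ => 1 - s ^ 2) (-(2 * t)) t := by
    simpa using ((hasDerivAt_pow 2 t).const_sub 1)
  have h2 : HasDerivAt (fun s : ℝ => Real.sqrt (1 - s ^ 2)) (-(2 * t) / (2 * B)) t :=
    h1.sqrt (ne_of_gt hBt)
  have h3 : HasDerivAt (fun s : ℝ => α * s) α t := by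
    simpa using (hasDerivAt_id t).const_mul α
  have h4 : HasDerivAt (fun s : ℝ => σ * Real.sqrt (1 - s ^ 2)) (σ * (-(2 * t) / (2 * B))) t :=
    h2.const_mul σ
  have hden : σ * B ≠ 0 := by positivity
  have h5 : HasDerivAt (fun s : ℝ => α * s / (σ * Real.sqrt (1 - s ^ 2)))
      ((α * (σ * B) - α * t * (σ * (-(2 * t) / (2 * B)))) / (σ * B) ^ 2) t := h3.div h4 hden
  -- bounds on the inner value u = α t / (σ B)
  have hu0 : 0 < α * t / (σ * B) := by positivity
  have hu1 : α * t / (σ * B) < 1 := by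
    rw [div_lt_one (by positivity)]
    nlinarith [hB2, hσ2, mul_pos hσ0 hB0, sq_nonneg (σ * B - α * t), mul_pos hα0 ht0]
  have harc1 : HasDerivAt (fun s : ℝ => Real.arccos (α * s / (σ * Real.sqrt (1 - s ^ 2))))
      (-(1 / Real.sqrt (1 - (α * t / (σ * B)) ^ 2)) *
        ((α * (σ * B) - α * t * (σ * (-(2 * t) / (2 * B)))) / (σ * B) ^ 2)) t :=
    by have := (Real.hasDerivAt_arccos (x := α * t / (σ * B)) (by linarith) (ne_of_lt hu1)).comp t h5; exact this
  have hv1 : t / σ < 1 := (div_lt_one hσ0).mpr ht1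
  have hv0 : 0 < t / σ := by positivity
  have h6 : HasDerivAt (fun s : ℝ => s / σ) (1 / σ) t := by
    simpa using (hasDerivAt_id t).div_const σ
  have harc2 : HasDerivAt (fun s : ℝ => Real.arccos (s / σ))
      (-(1 / Real.sqrt (1 - (t / σ) ^ 2)) * (1 / σ)) t :=
    by have := (Real.hasDerivAt_arccos (x := t / σ) (by linarith) (ne_of_lt hv1)).comp t h6; exact this
  have hmain := (harc1.const_mul α).sub harc2
  refine hmain.congr_deriv (Eq.symm ?_)
  -- simplify the two square roots
  have hS1 : Real.sqrt (1 - (α * t / (σ * B)) ^ 2) = A / (σ * B) := by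
    rw [show 1 - (α * t / (σ * B)) ^ 2 = (A / (σ * B)) ^ 2 by
      field_simp; nlinarith [hA2, hB2, hσ2]]
    exact Real.sqrt_sq (by positivity)
  have hS2 : Real.sqrt (1 - (t / σ) ^ 2) = A / σ := by
    rw [show 1 - (t / σ) ^ 2 = (A / σ) ^ 2 by field_simp; nlinarith [hA2]]
    exact Real.sqrt_sq (by positivity)
  rw [hS1, hS2]
  have h1t : (1 : ℝ) - t ^ 2 = B ^ 2 := hB2.symm
  rw [h1t]
  field_simp
  ring_nf
  linear_combination hA2 + hσ2 - (1-α^2) * hB2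
end

section
/- Let 0 < α < 1, σ = √(1−α²), 0 < β < 1, and set t = σ(1+β²)/(1−β²). Then σ < t, β = √((t−σ)/(t+σ)), and the map β(t) = √((t−σ)/(t+σ)) satisfies, for σ < t < 1, the identity ((1−t²)/√(t²−σ²))·(dβ/dt) = (1−β²)(α²(1+β²)² − 4β²)/(8σ²β²). -/
/-- Equations (109), (111) and (112) of the paper: with `σ = √(1−α²)`, `0 < β < 1`
and `t = σ(1+β²)/(1−β²)`, one has `σ < t` and `β = √((t−σ)/(t+σ))`; moreover, for
`σ < t < 1` the map `β(t) = √((t−σ)/(t+σ))` satisfies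
`((1−t²)/√(t²−σ²))·(dβ/dt) = (1−β²)(α²(1+β²)² − 4β²)/(8σ²β²)`. -/
theorem stmt_15 (α σ β t : ℝ) (hα0 : 0 < α) (hα1 : α < 1)
    (hσ : σ = Real.sqrt (1 - α ^ 2)) (hβ0 : 0 < β) (hβ1 : β < 1)
    (ht : t = σ * (1 + β ^ 2) / (1 - β ^ 2)) :
    σ < t ∧
    β = Real.sqrt ((t - σ) / (t + σ)) ∧
    (∀ t' : ℝ, σ < t' → t' < 1 →
      ((1 - t' ^ 2) / Real.sqrt (t' ^ 2 - σ ^ 2))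
          * deriv (fun s : ℝ => Real.sqrt ((s - σ) / (s + σ))) t'
        = (1 - Real.sqrt ((t' - σ) / (t' + σ)) ^ 2)
            * (α ^ 2 * (1 + Real.sqrt ((t' - σ) / (t' + σ)) ^ 2) ^ 2
              - 4 * Real.sqrt ((t' - σ) / (t' + σ)) ^ 2)
            / (8 * σ ^ 2 * Real.sqrt ((t' - σ) / (t' + σ)) ^ 2)) := by
  have hσsq : σ ^ 2 = 1 - α ^ 2 := by
    rw [hσ, Real.sq_sqrt (by nlinarith)]
  have hσpos : 0 < σ := by
    rw [hσ]; exact Real.sqrt_pos.2 (by nlinarith)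
  have h1β : 0 < 1 - β ^ 2 := by nlinarith
  have hσt : σ < t := by
    rw [ht, lt_div_iff₀ h1β]
    nlinarith [mul_pos hσpos (pow_pos hβ0 2)]
  have hratio : (t - σ) / (t + σ) = β ^ 2 := by
    rw [ht]
    rw [div_eq_iff (by nlinarith : σ * (1 + β ^ 2) / (1 - β ^ 2) + σ ≠ 0)]
    field_simp
    ring
  refine ⟨hσt, by rw [hratio, Real.sqrt_sq hβ0.le], ?_⟩
  intro t' h1 h2
  have hts : 0 < t' + σ := by linarith
  have htm : 0 < t' - σ := by linarith
  have hgpos : 0 < (t' - σ) / (t' + σ) := div_pos htm hts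
  set u := Real.sqrt ((t' - σ) / (t' + σ)) with hudef
  have hu : u ^ 2 = (t' - σ) / (t' + σ) := Real.sq_sqrt hgpos.le
  have hupos : 0 < u := Real.sqrt_pos.2 hgpos
  have hg : HasDerivAt (fun s : ℝ => (s - σ) / (s + σ)) (2 * σ / (t' + σ) ^ 2) t' := by
    have ha : HasDerivAt (fun s : ℝ => s - σ) 1 t' := (hasDerivAt_id t').sub_const σ
    have hb : HasDerivAt (fun s : ℝ => s + σ) 1 t' := (hasDerivAt_id t').add_const σ
    have := ha.fun_div hb hts.ne'
    refine this.congr_deriv ?_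
    ring
  have hsq : HasDerivAt (fun s : ℝ => Real.sqrt ((s - σ) / (s + σ)))
      (1 / (2 * u) * (2 * σ / (t' + σ) ^ 2)) t' :=
    (Real.hasDerivAt_sqrt hgpos.ne').comp t' hg
  rw [hsq.deriv]
  have hsqrtfac : Real.sqrt (t' ^ 2 - σ ^ 2) = (t' + σ) * u := by
    have h : t' ^ 2 - σ ^ 2 = (t' + σ) ^ 2 * ((t' - σ) / (t' + σ)) := by
      field_simp; ring
    rw [h, Real.sqrt_mul (sq_nonneg _), Real.sqrt_sq hts.le]
  rw [hsqrtfac]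
  have hα2 : α ^ 2 = 1 - σ ^ 2 := by linarith
  rw [hα2]
  have huσ : u ^ 2 * (t' + σ) = t' - σ := by
    rw [hu]; field_simp
  have hu1 : u ^ 2 < 1 := by
    rw [hu, div_lt_one hts]; linarith
  have h1u : 0 < 1 - u ^ 2 := by linarith
  have ht'eq : t' = σ * (1 + u ^ 2) / (1 - u ^ 2) := by
    rw [eq_div_iff h1u.ne']
    linear_combination -huσ
  rw [ht'eq]
  have h2σ : σ ≠ 0 := hσpos.ne'
  have h2u : u ≠ 0 := hupos.ne'
  field_simp
  ring
end
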